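/- Let F : ℂ → ℂ be an entire function satisfying F(s+1) = F(s) for all s ∈ ℂ, and suppose F(s) = o(exp(2π|Im(s)|)) as |Im(s)| → ∞, i.e., for every ε > 0 there exists T > 0 such that |F(s)| ≤ ε·exp(2π|Im(s)|) whenever |Im(s)| ≥ T. Then F is constant. -/

import Mathlib

open Complex Set Filter Topology


lemma quotEntire (f g : ℂ → ℂ) (hf : Differentiable ℂ f) (hg : Differentiable ℂ g)
    (hz : ∀ s, g s = 0 → f s = 0) (hz' : ∀ s, g s = 0 → deriv g s ≠ 0) :
    Differentiable ℂ (fun s => if g s = 0 then deriv f s / deriv g s else f s / g s) := by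
  intro c
  by_cases hc : g c = 0
  · -- zeros of g are isolated near c
    have hne : ∀ᶠ s in 𝓝[≠] c, g s ≠ 0 := by
      rcases ((hg.analyticAt c).eventually_eq_zero_or_eventually_ne_zero) with h | h
      · exfalso
        apply hz' c hc
        have : deriv g c = deriv (fun _ : ℂ => (0:ℂ)) c := Filter.EventuallyEq.deriv_eq h
        simpa using this
      · exact h
    obtain ⟨r, hr0, hrball⟩ : ∃ r > 0, ∀ s ∈ Metric.ball c r, s ≠ c → g s ≠ 0 := by
      rcases eventually_nhdsWithin_iff.mp hne with h
      rcases Metric.eventually_nhds_iff_ball.mp h with ⟨r, hr0, hr⟩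
      exact ⟨r, hr0, fun s hs hsne => hr s hs hsne⟩
    have hmem : Metric.ball c r ∈ 𝓝 c := Metric.ball_mem_nhds c hr0
    have hds_f : DifferentiableOn ℂ (dslope f c) (Metric.ball c r) :=
      (Complex.differentiableOn_dslope hmem).mpr (hf.differentiableOn)
    have hds_g : DifferentiableOn ℂ (dslope g c) (Metric.ball c r) :=
      (Complex.differentiableOn_dslope hmem).mpr (hg.differentiableOn)
    have hds_ne : ∀ s ∈ Metric.ball c r, dslope g c s ≠ 0 := by
      intro s hs
      rcases eq_or_ne s c with rfl | hsc
      · simpa [dslope_same] using hz' s hc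
      · rw [dslope_of_ne _ hsc]
        have := hrball s hs hsc
        simp [slope, hc]
        exact ⟨sub_ne_zero.mpr hsc, this⟩
    have hq : DifferentiableOn ℂ (fun s => dslope f c s / dslope g c s) (Metric.ball c r) :=
      hds_f.div hds_g hds_ne
    have hq' : DifferentiableAt ℂ (fun s => dslope f c s / dslope g c s) c :=
      hq.differentiableAt hmem
    apply hq'.congr_of_eventuallyEq
    filter_upwards [hmem] with s hs
    rcases eq_or_ne s c with rfl | hsc
    · simp [hc, dslope_same]
    · have hgs : g s ≠ 0 := hrball s hs hsc
      rw [if_neg hgs, dslope_of_ne _ hsc, dslope_of_ne _ hsc]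
      have hfc : f c = 0 := hz c hc
      have hsc' : s - c ≠ 0 := sub_ne_zero.mpr hsc
      field_simp [slope, hc, hfc]
      simp only [slope_def_field, hc, hfc, sub_zero]; ring
  · have hU : {s : ℂ | g s ≠ 0} ∈ 𝓝 c := by
      have : IsOpen {s : ℂ | g s ≠ 0} := isOpen_ne.preimage hg.continuous
      exact this.mem_nhds hc
    have : DifferentiableAt ℂ (fun s => f s / g s) c := (hf c).div (hg c) hc
    apply this.congr_of_eventuallyEq
    filter_upwards [hU] with s hs
    simp [hs]


-- deriv of a 1-periodic function is 1-periodic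
lemma deriv_per {f : ℂ → ℂ} (h : ∀ s, f (s + 1) = f s) (s : ℂ) :
    deriv f (s + 1) = deriv f s := by
  have hfe : (fun x : ℂ => f (x + 1)) = f := funext h
  rw [← deriv_comp_add_const, hfe]

lemma per_int {f : ℂ → ℂ} (h : ∀ s, f (s + 1) = f s) (s : ℂ) (n : ℤ) :
    f (s + n) = f s := by
  have hp : Function.Periodic f 1 := h
  simpa using (hp.int_mul n) s

lemma absdiv {a b : ℂ} {A Bd : ℝ} (ha : ‖a‖ ≤ A) (hb : Bd ≤ ‖b‖)
    (hBd : 0 < Bd) : ‖a / b‖ ≤ A / Bd := by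
  rw [norm_div]
  exact div_le_div₀ ((norm_nonneg a).trans ha) ha hBd hb




/-- Liouville-type lemma: an entire function with period 1 which is
`o(exp(2π|Im s|))` as `|Im s| → ∞` is constant. -/
theorem stmt_7 (F : ℂ → ℂ) (hF : Differentiable ℂ F)
    (hper : ∀ s : ℂ, F (s + 1) = F s)
    (hgrowth : ∀ ε : ℝ, 0 < ε → ∃ T : ℝ, 0 < T ∧ ∀ s : ℂ, T ≤ |s.im| →
      ‖F s‖ ≤ ε * Real.exp (2 * Real.pi * |s.im|)) :
    ∃ c : ℂ, ∀ s : ℂ, F s = c := by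
  have hπ : (0:ℝ) < Real.pi := Real.pi_pos
  have he2 : (2:ℝ) ≤ Real.exp (2*Real.pi) := by
    nlinarith [Real.add_one_le_exp (2*Real.pi), Real.pi_gt_three]
  set c2 : ℂ := 2*(Real.pi:ℂ)*Complex.I with hc2def
  have hc2ne : c2 ≠ 0 := by
    simp [hc2def, Complex.I_ne_zero, Real.pi_ne_zero]
  have habs1 : ∀ s : ℂ, ‖Complex.exp (c2 * s)‖ = Real.exp (-(2*Real.pi*s.im)) := by
    intro s
    rw [Complex.norm_exp]
    congr 1
    simp [hc2def, Complex.mul_re, Complex.mul_im]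
  have habs2 : ∀ s : ℂ, ‖Complex.exp (-c2 * s)‖ = Real.exp (2*Real.pi*s.im) := by
    intro s
    rw [Complex.norm_exp]
    congr 1
    simp [hc2def, Complex.mul_re, Complex.mul_im]
  have hcancel : ∀ (s t : ℂ), c2 * s = c2 * t ↔ s = t := by
    intro s t
    exact mul_right_inj' hc2ne
  -- the two denominators
  set E₁ : ℂ → ℂ := fun s => Complex.exp (c2 * s) - 1 with hE₁def
  set E₂ : ℂ → ℂ := fun s => Complex.exp (-c2 * s) - Complex.exp (2*(Real.pi:ℂ)) with hE₂def
  have hE₁diff : Differentiable ℂ E₁ := ((differentiable_id.const_mul c2).cexp).sub_const 1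
  have hE₂diff : Differentiable ℂ E₂ := ((differentiable_id.const_mul (-c2)).cexp).sub_const _
  have hE₁zero : ∀ s : ℂ, E₁ s = 0 ↔ ∃ n : ℤ, s = (n:ℂ) := by
    intro s
    rw [hE₁def]
    simp only [sub_eq_zero]
    rw [Complex.exp_eq_one_iff]
    constructor
    · rintro ⟨n, hn⟩
      refine ⟨n, mul_left_cancel₀ hc2ne ?_⟩
      rw [hn, hc2def]; ring
    · rintro ⟨n, hn⟩
      exact ⟨n, by rw [hn, hc2def]; ring⟩
  have hE₂zero : ∀ s : ℂ, E₂ s = 0 ↔ ∃ n : ℤ, s = Complex.I + (n:ℂ) := by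
    intro s
    rw [hE₂def]
    simp only [sub_eq_zero]
    rw [Complex.exp_eq_exp_iff_exists_int]
    constructor
    · rintro ⟨n, hn⟩
      refine ⟨-n, mul_left_cancel₀ (neg_ne_zero.mpr hc2ne) ?_⟩
      rw [hn, hc2def]
      push_cast
      linear_combination (2*(Real.pi:ℂ)) * Complex.I_mul_I
    · rintro ⟨n, hn⟩
      refine ⟨-n, ?_⟩
      rw [hn, hc2def]
      push_cast
      linear_combination (-(2*(Real.pi:ℂ))) * Complex.I_mul_I
  have hE₁ne : ∀ s : ℂ, 1 ≤ |s.im| → E₁ s ≠ 0 := by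
    intro s hs h
    rcases (hE₁zero s).mp h with ⟨n, rfl⟩
    simp at hs
    linarith
  have hE₂ne : ∀ s : ℂ, 2 ≤ |s.im| → E₂ s ≠ 0 := by
    intro s hs h
    rcases (hE₂zero s).mp h with ⟨n, rfl⟩
    simp at hs
  -- denominator lower bounds
  have hE₁lowUp : ∀ s : ℂ, 1 ≤ s.im → (1:ℝ)/2 ≤ ‖E₁ s‖ := by
    intro s hs
    have h1 : ‖Complex.exp (c2*s)‖ ≤ 1/2 := by
      rw [habs1, Real.exp_neg]
      have h2 : (2:ℝ) ≤ Real.exp (2*Real.pi*s.im) :=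
        le_trans he2 (Real.exp_le_exp.mpr (by nlinarith))
      rw [one_div]
      exact inv_anti₀ (by norm_num) h2
    have h3 := norm_sub_norm_le (1:ℂ) (Complex.exp (c2*s))
    rw [norm_sub_rev] at h3
    simp only [norm_one] at h3
    rw [hE₁def]
    simp only
    linarith
  have hE₁lowDn : ∀ s : ℂ, s.im ≤ -1 → Real.exp (2*Real.pi*|s.im|)/2 ≤ ‖E₁ s‖ := by
    intro s hs
    have him : |s.im| = -s.im := abs_of_nonpos (by linarith)
    have h1 : ‖Complex.exp (c2*s)‖ = Real.exp (2*Real.pi*|s.im|) := by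
      rw [habs1, him]; ring_nf
    have h2 : (2:ℝ) ≤ Real.exp (2*Real.pi*|s.im|) :=
      le_trans he2 (Real.exp_le_exp.mpr (by nlinarith [abs_nonneg s.im, him]))
    have h3 := norm_sub_norm_le (Complex.exp (c2*s)) (1:ℂ)
    simp only [norm_one] at h3
    rw [hE₁def]
    simp only
    linarith
  have hE₂lowUp : ∀ s : ℂ, 2 ≤ s.im → Real.exp (2*Real.pi*s.im)/2 ≤ ‖E₂ s‖ := by
    intro s hs
    have h1 : ‖Complex.exp (2*(Real.pi:ℂ))‖ = Real.exp (2*Real.pi) := by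
      rw [Complex.norm_exp]
      norm_num
    have h4 : Real.exp (2*Real.pi) * 2 ≤ Real.exp (2*Real.pi*s.im) := by
      have : Real.exp (2*Real.pi) * Real.exp (2*Real.pi) ≤ Real.exp (2*Real.pi*s.im) := by
        rw [← Real.exp_add]
        exact Real.exp_le_exp.mpr (by nlinarith)
      nlinarith [Real.exp_pos (2*Real.pi)]
    have h3 := norm_sub_norm_le (Complex.exp (-c2*s)) (Complex.exp (2*(Real.pi:ℂ)))
    rw [habs2, h1] at h3
    rw [hE₂def]
    simp only
    linarith
  have hE₂lowDn : ∀ s : ℂ, s.im ≤ -2 → (1:ℝ) ≤ ‖E₂ s‖ := by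
    intro s hs
    have h1 : ‖Complex.exp (2*(Real.pi:ℂ))‖ = Real.exp (2*Real.pi) := by
      rw [Complex.norm_exp]
      norm_num
    have h2 : ‖Complex.exp (-c2*s)‖ ≤ 1 := by
      rw [habs2, ← Real.exp_zero]
      exact Real.exp_le_exp.mpr (by nlinarith)
    have h3 := norm_sub_norm_le (Complex.exp (2*(Real.pi:ℂ))) (Complex.exp (-c2*s))
    rw [norm_sub_rev] at h3
    rw [h1] at h3
    rw [hE₂def]
    simp only
    linarith
  -- K : first quotient
  set f₁ : ℂ → ℂ := fun s => F s - F 0 with hf₁def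
  have hf₁diff : Differentiable ℂ f₁ := hF.sub_const _
  have hf₁per : ∀ s : ℂ, f₁ (s + 1) = f₁ s := by
    intro s; rw [hf₁def]; simp only [hper]
  have hE₁per : ∀ s : ℂ, E₁ (s + 1) = E₁ s := by
    intro s
    rw [hE₁def]
    simp only
    rw [mul_add, mul_one, Complex.exp_add, hc2def, Complex.exp_two_pi_mul_I, mul_one]
  have hE₂per : ∀ s : ℂ, E₂ (s + 1) = E₂ s := by
    intro s
    rw [hE₂def]
    simp only
    rw [mul_add, mul_one, Complex.exp_add]
    have : Complex.exp (-c2) = 1 := by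
      rw [Complex.exp_eq_one_iff]
      exact ⟨-1, by rw [hc2def]; push_cast; ring⟩
    rw [this, mul_one]
  have hderivE₁ : ∀ s : ℂ, deriv E₁ s ≠ 0 := by
    intro s
    have h : HasDerivAt E₁ (Complex.exp (c2*s) * (c2*1)) s := by
      rw [hE₁def]
      exact (((hasDerivAt_id s).const_mul c2).cexp).sub_const 1
    rw [h.deriv]
    exact mul_ne_zero (Complex.exp_ne_zero _) (by rwa [mul_one])
  have hderivE₂ : ∀ s : ℂ, deriv E₂ s ≠ 0 := by
    intro s
    have h : HasDerivAt E₂ (Complex.exp (-c2*s) * (-c2*1)) s := by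
      rw [hE₂def]
      exact (((hasDerivAt_id s).const_mul (-c2)).cexp).sub_const _
    rw [h.deriv]
    exact mul_ne_zero (Complex.exp_ne_zero _) (by rw [mul_one]; exact neg_ne_zero.mpr hc2ne)
  have hperF : ∀ (s : ℂ) (n : ℤ), F (s + n) = F s := per_int hper
  have hf₁zero : ∀ s : ℂ, E₁ s = 0 → f₁ s = 0 := by
    intro s hs
    rcases (hE₁zero s).mp hs with ⟨n, rfl⟩
    rw [hf₁def]
    simp only [sub_eq_zero]
    simpa using hperF 0 n
  set K : ℂ → ℂ := fun s => if E₁ s = 0 then deriv f₁ s / deriv E₁ s else f₁ s / E₁ s with hKdef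
  have hKdiff : Differentiable ℂ K :=
    quotEntire f₁ E₁ hf₁diff hE₁diff hf₁zero (fun s _ => hderivE₁ s)
  have hKper : ∀ s : ℂ, K (s + 1) = K s := by
    intro s
    rw [hKdef]
    simp only
    rw [hE₁per, hf₁per, deriv_per hE₁per, deriv_per hf₁per]
  have hKint : ∀ (s : ℂ) (n : ℤ), K (s + n) = K s := per_int hKper
  have hKeq : ∀ s : ℂ, E₁ s ≠ 0 → K s = f₁ s / E₁ s := by
    intro s hs; rw [hKdef]; simp only [if_neg hs]
  -- numerator bound
  set A : ℝ := ‖F 0‖ with hAdef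
  have hAnn : 0 ≤ A := norm_nonneg _
  have hf₁b : ∀ ε : ℝ, 0 < ε → ∃ T : ℝ, 2 ≤ T ∧ ∀ s : ℂ, T ≤ |s.im| →
      ‖f₁ s‖ ≤ ε * Real.exp (2*Real.pi*|s.im|) + A := by
    intro ε hε
    obtain ⟨T, hT0, hT⟩ := hgrowth ε hε
    refine ⟨max T 2, le_max_right _ _, fun s hs => ?_⟩
    have h1 := hT s (le_trans (le_max_left _ _) hs)
    calc ‖f₁ s‖ ≤ ‖F s‖ + A := by
          rw [hf₁def]
          have h2 := norm_sub_le (F s) (F 0)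
          simpa [hAdef] using h2
      _ ≤ ε * Real.exp (2*Real.pi*|s.im|) + A := by linarith
  -- K bounds
  have hKup : ∀ ε : ℝ, 0 < ε → ∃ T : ℝ, 2 ≤ T ∧ ∀ s : ℂ, T ≤ s.im →
      ‖K s‖ ≤ 2*(ε * Real.exp (2*Real.pi*s.im) + A) := by
    intro ε hε
    obtain ⟨T, hT2, hT⟩ := hf₁b ε hε
    refine ⟨T, hT2, fun s hs => ?_⟩
    have him : |s.im| = s.im := abs_of_nonneg (by linarith)
    have hE1 : E₁ s ≠ 0 := hE₁ne s (by rw [him]; linarith)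
    rw [hKeq s hE1]
    have hb := absdiv (hT s (by rw [him]; exact hs)) (hE₁lowUp s (by linarith)) (by norm_num)
    rw [him] at hb
    have hid : (ε * Real.exp (2*Real.pi*s.im) + A)/(1/2) =
        2*(ε * Real.exp (2*Real.pi*s.im) + A) := by ring
    linarith
  have hKdn : ∀ ε : ℝ, 0 < ε → ∃ T : ℝ, 2 ≤ T ∧ ∀ s : ℂ, s.im ≤ -T →
      ‖K s‖ ≤ 2*ε + 2*A*Real.exp (-(2*Real.pi*|s.im|)) := by
    intro ε hε
    obtain ⟨T, hT2, hT⟩ := hf₁b ε hε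
    refine ⟨T, hT2, fun s hs => ?_⟩
    have him : |s.im| = -s.im := abs_of_nonpos (by linarith)
    have himT : T ≤ |s.im| := by rw [him]; linarith
    have hE1 : E₁ s ≠ 0 := hE₁ne s (by linarith)
    rw [hKeq s hE1]
    have hb := absdiv (hT s himT) (hE₁lowDn s (by linarith)) (by positivity)
    have hx : (0:ℝ) < Real.exp (2*Real.pi*|s.im|) := Real.exp_pos _
    have hid : (ε * Real.exp (2*Real.pi*|s.im|) + A)/(Real.exp (2*Real.pi*|s.im|)/2) =
        2*ε + 2*A*(Real.exp (2*Real.pi*|s.im|))⁻¹ := by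
      field_simp
    rw [hid] at hb
    rw [Real.exp_neg]
    exact hb
  -- L : second quotient
  set f₂ : ℂ → ℂ := fun s => K s - K Complex.I with hf₂def
  have hf₂diff : Differentiable ℂ f₂ := hKdiff.sub_const _
  have hf₂per : ∀ s : ℂ, f₂ (s + 1) = f₂ s := by
    intro s; rw [hf₂def]; simp only [hKper]
  have hf₂zero : ∀ s : ℂ, E₂ s = 0 → f₂ s = 0 := by
    intro s hs
    rcases (hE₂zero s).mp hs with ⟨n, rfl⟩
    rw [hf₂def]
    simp only [sub_eq_zero]
    exact hKint Complex.I n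
  set L : ℂ → ℂ := fun s => if E₂ s = 0 then deriv f₂ s / deriv E₂ s else f₂ s / E₂ s with hLdef
  have hLdiff : Differentiable ℂ L :=
    quotEntire f₂ E₂ hf₂diff hE₂diff hf₂zero (fun s _ => hderivE₂ s)
  have hLper : ∀ s : ℂ, L (s + 1) = L s := by
    intro s
    rw [hLdef]
    simp only
    rw [hE₂per, hf₂per, deriv_per hE₂per, deriv_per hf₂per]
  have hLint : ∀ (s : ℂ) (n : ℤ), L (s + n) = L s := per_int hLper
  have hLeq : ∀ s : ℂ, E₂ s ≠ 0 → L s = f₂ s / E₂ s := by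
    intro s hs; rw [hLdef]; simp only [if_neg hs]
  set KI : ℝ := ‖K Complex.I‖ with hKIdef
  have hKInn : 0 ≤ KI := norm_nonneg _
  have hf₂b : ∀ s : ℂ, ‖f₂ s‖ ≤ ‖K s‖ + KI := by
    intro s
    rw [hf₂def]
    have h2 := norm_sub_le (K s) (K Complex.I)
    simpa [hKIdef] using h2
  -- L is bounded
  obtain ⟨Tu, hTu2, hKu⟩ := hKup 1 one_pos
  obtain ⟨Td, hTd2, hKd⟩ := hKdn 1 one_pos
  set MB : ℝ := max Tu Td with hMBdef
  have hMB2 : 2 ≤ MB := le_trans hTu2 (le_max_left _ _)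
  set CB : ℝ := 2 + 2*A + KI with hCBdef
  have hCBpos : 0 < CB := by rw [hCBdef]; linarith
  have hLup : ∀ s : ℂ, MB ≤ s.im → ‖L s‖ ≤ 2*CB := by
    intro s hs
    have hsTu : Tu ≤ s.im := le_trans (le_max_left _ _) hs
    have hs2 : 2 ≤ s.im := by linarith
    have hE2 : E₂ s ≠ 0 := hE₂ne s (by rw [_root_.abs_of_nonneg (show (0:ℝ) ≤ s.im by linarith)]; linarith)
    rw [hLeq s hE2]
    set e : ℝ := Real.exp (2*Real.pi*s.im) with hedef
    have he1 : 1 ≤ e := Real.one_le_exp (by positivity)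
    have hnum : ‖f₂ s‖ ≤ CB * e := by
      have h1 := hf₂b s
      have h2 := hKu s hsTu
      rw [hCBdef]
      nlinarith
    have hb := absdiv hnum (hE₂lowUp s hs2) (by positivity)
    have hid : CB * e / (e/2) = 2*CB := by
      field_simp
    linarith
  have hLdn : ∀ s : ℂ, s.im ≤ -MB → ‖L s‖ ≤ 2*CB := by
    intro s hs
    have hsTd : s.im ≤ -Td := by
      have := le_max_right Tu Td
      linarith [hMBdef ▸ this]
    have hs2 : s.im ≤ -2 := by linarith
    have hE2 : E₂ s ≠ 0 := hE₂ne s (by rw [_root_.abs_of_nonpos (show s.im ≤ (0:ℝ) by linarith)]; linarith)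
    rw [hLeq s hE2]
    have hnum : ‖f₂ s‖ ≤ CB := by
      have h1 := hf₂b s
      have h2 := hKd s hsTd
      have h3 : Real.exp (-(2*Real.pi*|s.im|)) ≤ 1 := by
        rw [← Real.exp_zero]
        apply Real.exp_le_exp.mpr
        have := abs_nonneg s.im
        nlinarith
      rw [hCBdef]
      nlinarith
    have hb := absdiv hnum (hE₂lowDn s hs2) one_pos
    rw [div_one] at hb
    linarith
  obtain ⟨B1, hB1⟩ := (isCompact_closedBall (0:ℂ) (MB+2)).exists_bound_of_continuousOn
    hLdiff.continuous.continuousOn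
  have hLbdd : ∀ s : ℂ, ‖L s‖ ≤ max B1 (2*CB) := by
    intro s
    set t : ℂ := s + ((-⌊s.re⌋ : ℤ) : ℂ) with htdef
    have hLt : L t = L s := hLint s (-⌊s.re⌋)
    have htre : t.re = s.re - ⌊s.re⌋ := by
      have h9 : (((-⌊s.re⌋ : ℤ) : ℂ)).re = (-⌊s.re⌋ : ℝ) := by simp
      rw [htdef, Complex.add_re, h9]; push_cast; ring
    have htim : t.im = s.im := by
      rw [htdef]; simp
    have htre0 : 0 ≤ t.re := by rw [htre]; exact sub_nonneg.mpr (Int.floor_le _)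
    have htre1 : t.re ≤ 1 := by
      rw [htre]
      have := Int.lt_floor_add_one s.re
      linarith
    rcases le_or_gt |t.im| MB with him | him
    · have hmem : t ∈ Metric.closedBall (0:ℂ) (MB+2) := by
        rw [Metric.mem_closedBall, Complex.dist_eq, sub_zero]
        have h4 := Complex.norm_le_abs_re_add_abs_im t
        have h5 : |t.re| ≤ 1 := abs_le.mpr ⟨by linarith, htre1⟩
        linarith
      have := hB1 t hmem
      rw [hLt] at this
      exact le_trans this (le_max_left _ _)
    · rcases le_total 0 t.im with hsg | hsg
      · have : MB ≤ t.im := by rw [_root_.abs_of_nonneg hsg] at him; linarith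
        have := hLup t this
        rw [hLt] at this
        exact le_trans this (le_max_right _ _)
      · have : t.im ≤ -MB := by rw [_root_.abs_of_nonpos hsg] at him; linarith
        have := hLdn t this
        rw [hLt] at this
        exact le_trans this (le_max_right _ _)
  have hLrange : Bornology.IsBounded (Set.range L) := by
    rw [isBounded_iff_forall_norm_le]
    exact ⟨max B1 (2*CB), by rintro x ⟨s, rfl⟩; simpa using hLbdd s⟩
  have hLconst : ∀ s : ℂ, L s = L 0 := fun s =>
    hLdiff.apply_eq_apply_of_bounded hLrange s 0
  -- limit helper
  have htend : ∀ b C : ℝ, Tendsto (fun y : ℝ => b + C * Real.exp (-(2*Real.pi*y))) atTop (𝓝 b) := by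
    intro b C
    have h1 : Tendsto (fun y : ℝ => 2*Real.pi*y) atTop atTop :=
      Tendsto.const_mul_atTop (by positivity) tendsto_id
    have h2 : Tendsto (fun y : ℝ => Real.exp (-(2*Real.pi*y))) atTop (𝓝 0) := by
      exact Real.tendsto_exp_neg_atTop_nhds_zero.comp h1
    have h3 := (tendsto_const_nhds (x := b) (f := atTop)).add (h2.const_mul C)
    simpa using h3
  have himy : ∀ y : ℝ, ((y : ℂ) * Complex.I).im = y := by intro y; simp
  -- L vanishes
  have hL0 : L 0 = 0 := by
    have key : ∀ ε : ℝ, 0 < ε → ‖L 0‖ ≤ 4*ε := by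
      intro ε hε
      obtain ⟨T, hT2, hKT⟩ := hKup ε hε
      have hev : ∀ y : ℝ, T ≤ y →
          ‖L 0‖ ≤ 4*ε + (4*A + 2*KI) * Real.exp (-(2*Real.pi*y)) := by
        intro y hy
        set s : ℂ := (y:ℂ) * Complex.I with hsdef
        have hsim : s.im = y := himy y
        have hy2 : 2 ≤ y := le_trans hT2 hy
        have hE2 : E₂ s ≠ 0 := hE₂ne s
          (by rw [hsim, _root_.abs_of_nonneg (show (0:ℝ) ≤ y by linarith)]; linarith)
        rw [(hLconst s).symm, hLeq s hE2]
        set x : ℝ := Real.exp (2*Real.pi*y) with hxdef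
        have hxpos : (0:ℝ) < x := Real.exp_pos _
        have hnum : ‖f₂ s‖ ≤ 2*(ε*x + A) + KI := by
          have h1 := hf₂b s
          have h2 := hKT s (by rw [hsim]; exact hy)
          rw [hsim] at h2
          linarith
        have hden : x/2 ≤ ‖E₂ s‖ := by
          have := hE₂lowUp s (by rw [hsim]; linarith)
          rwa [hsim] at this
        have hb := absdiv hnum hden (by positivity)
        have hid : (2*(ε*x + A) + KI)/(x/2) = 4*ε + (4*A + 2*KI) * x⁻¹ := by
          field_simp
          ring
        rw [hid] at hb
        rw [hxdef] at hb
        rwa [← Real.exp_neg] at hb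
      exact ge_of_tendsto (htend (4*ε) (4*A + 2*KI)) (eventually_atTop.mpr ⟨T, hev⟩)
    have h0 : ‖L 0‖ ≤ 0 := by
      by_contra h
      push_neg at h
      have := key (‖L 0‖/8) (by linarith)
      linarith
    exact norm_eq_zero.mp (le_antisymm h0 (norm_nonneg _))
  have hLall : ∀ s : ℂ, L s = 0 := fun s => (hLconst s).trans hL0
  -- K is constant
  have hKconst : ∀ s : ℂ, K s = K Complex.I := by
    intro s
    by_cases hE2 : E₂ s = 0
    · rcases (hE₂zero s).mp hE2 with ⟨n, rfl⟩
      exact hKint Complex.I n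
    · have h := hLall s
      rw [hLeq s hE2] at h
      have h2 : f₂ s = 0 := (div_eq_zero_iff.mp h).resolve_right hE2
      rw [hf₂def] at h2
      simp only at h2
      exact sub_eq_zero.mp h2
  -- K I = 0
  have hKI0 : K Complex.I = 0 := by
    have key : ∀ ε : ℝ, 0 < ε → ‖K Complex.I‖ ≤ 2*ε := by
      intro ε hε
      obtain ⟨T, hT2, hKT⟩ := hKdn ε hε
      have hev : ∀ y : ℝ, T ≤ y →
          ‖K Complex.I‖ ≤ 2*ε + 2*A * Real.exp (-(2*Real.pi*y)) := by
        intro y hy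
        set s : ℂ := ((-y : ℝ):ℂ) * Complex.I with hsdef
        have hsim : s.im = -y := himy (-y)
        have h2 := hKT s (by rw [hsim]; linarith)
        have habsim : |s.im| = y := by
          rw [hsim, abs_neg, _root_.abs_of_nonneg (show (0:ℝ) ≤ y by linarith)]
        rw [habsim] at h2
        rw [← hKconst s]
        exact h2
      exact ge_of_tendsto (htend (2*ε) (2*A)) (eventually_atTop.mpr ⟨T, hev⟩)
    have h0 : ‖K Complex.I‖ ≤ 0 := by
      by_contra h
      push_neg at h
      have := key (‖K Complex.I‖/4) (by linarith)
      linarith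
    exact norm_eq_zero.mp (le_antisymm h0 (norm_nonneg _))
  -- conclude
  refine ⟨F 0, fun s => ?_⟩
  by_cases hE1 : E₁ s = 0
  · rcases (hE₁zero s).mp hE1 with ⟨n, rfl⟩
    simpa using hperF 0 n
  · have h := hKconst s
    rw [hKI0, hKeq s hE1] at h
    have h2 : f₁ s = 0 := (div_eq_zero_iff.mp h).resolve_right hE1
    rw [hf₁def] at h2
    simp only at h2
    exact sub_eq_zero.mp h2
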